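/- Let Ω be a metric space, and let f₁, …, f_r, φ, g, g₁, …, g_r be continuous real-valued functions on Ω with fᵢ = g·gᵢ for each i. Assume the common zero set Z(f₁, …, f_r) is nowhere dense in Ω and that φ satisfies the pointwise test for f₁, …, f_r. Then there exists a unique continuous function ψ : Ω → ℝ such that φ = g·ψ. -/

import Mathlib

theorem exists_unique_continuous_quotient
    {Ω : Type*} [MetricSpace Ω] (r : ℕ) (f g' : Fin r → Ω → ℝ) (φ g : Ω → ℝ)
    (hf : ∀ i, Continuous (f i)) (hφ : Continuous φ) (hg : Continuous g)
    (hg' : ∀ i, Continuous (g' i))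
    (hfac : ∀ i x, f i x = g x * g' i x)
    (hZ : IsNowhereDense {x | ∀ i, f i x = 0})
    (hPT : ∀ p : Ω, ∃ ψ : Fin r → Ω → ℝ, (∀ i, ContinuousAt (ψ i) p) ∧
      ∀ x, φ x = ∑ i, ψ i x * f i x) :
    ∃! ψ : Ω → ℝ, Continuous ψ ∧ ∀ x, φ x = g x * ψ x := by
  classical
  choose Ψ hΨc hΨeq using hPT
  set ψ : Ω → ℝ := fun x => ∑ i, Ψ x i x * g' i x with hψdef
  -- key identity: for every p and x, φ x = g x * (h p x)
  have key : ∀ p x : Ω, φ x = g x * ∑ i, Ψ p i x * g' i x := by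
    intro p x
    rw [hΨeq p x, Finset.mul_sum]
    refine Finset.sum_congr rfl fun i _ => ?_
    rw [hfac]; ring
  have hφψ : ∀ x, φ x = g x * ψ x := fun x => key x x
  -- the set where g ≠ 0 is dense
  have hU : Dense {x : Ω | g x ≠ 0} := by
    have h1 : {x : Ω | g x = 0} ⊆ closure {x : Ω | ∀ i, f i x = 0} := by
      intro x hx
      apply subset_closure
      intro i; rw [hfac]; simp [Set.mem_setOf_eq.mp hx]
    have h2 : interior {x : Ω | g x = 0} = ∅ := by
      apply Set.eq_empty_of_subset_empty
      calc interior {x : Ω | g x = 0}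
          ⊆ interior (closure {x : Ω | ∀ i, f i x = 0}) := interior_mono h1
        _ = ∅ := hZ
    have := interior_eq_empty_iff_dense_compl.mp h2
    convert this using 1
    ext x; simp
  -- on U, ψ agrees with h p for every p
  have hagree : ∀ p x : Ω, g x ≠ 0 → ψ x = ∑ i, Ψ p i x * g' i x := by
    intro p x hx
    have := (hφψ x).symm.trans (key p x)
    exact mul_left_cancel₀ hx this
  have hψcont : Continuous ψ := by
    rw [Metric.continuous_iff]
    intro p ε hε
    have hhp : ContinuousAt (fun y => ∑ i, Ψ p i y * g' i y) p := by
      exact tendsto_finset_sum _ fun i _ => (hΨc p i).mul (hg' i).continuousAt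
    obtain ⟨δ, hδ, hδ'⟩ := Metric.continuousAt_iff.mp hhp (ε / 2) (by linarith)
    refine ⟨δ / 2, by linarith, fun x hx => ?_⟩
    by_cases hgx : g x ≠ 0
    · have : ψ x = ∑ i, Ψ p i x * g' i x := hagree p x hgx
      rw [this]
      have := hδ' (by linarith [hx] : dist x p < δ)
      calc dist (∑ i, Ψ p i x * g' i x) (ψ p) < ε / 2 := this
        _ < ε := by linarith
    · -- use continuity of h x at x and density of U
      have hhx : ContinuousAt (fun y => ∑ i, Ψ x i y * g' i y) x := by
        exact tendsto_finset_sum _ fun i _ => (hΨc x i).mul (hg' i).continuousAt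
      obtain ⟨δ', hδ'pos, hδ''⟩ := Metric.continuousAt_iff.mp hhx (ε / 2) (by linarith)
      have hxcl : x ∈ closure {y : Ω | g y ≠ 0} := hU x
      obtain ⟨y, hy, hyx⟩ := Metric.mem_closure_iff.mp hxcl (min δ' (δ - dist x p))
        (lt_min hδ'pos (by linarith [hx]))
      have hyx1 : dist y x < δ' := by rw [dist_comm]; exact lt_of_lt_of_le hyx (min_le_left _ _)
      have hyp : dist y p < δ := by
        have := dist_triangle y x p
        have h3 : dist y x < δ - dist x p := by
          rw [dist_comm]; exact lt_of_lt_of_le hyx (min_le_right _ _)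
        linarith
      have e1 : ψ y = ∑ i, Ψ p i y * g' i y := hagree p y hy
      have e2 : ψ y = ∑ i, Ψ x i y * g' i y := hagree x y hy
      have d1 := hδ'' hyx1  -- dist (h x y) (ψ x) < ε/2
      have d2 := hδ' hyp    -- dist (h p y) (ψ p) < ε/2
      have : dist (ψ x) (ψ p) ≤ dist (ψ x) (ψ y) + dist (ψ y) (ψ p) := dist_triangle _ _ _
      have d1' : dist (ψ x) (ψ y) < ε / 2 := by
        rw [e2, dist_comm]; exact d1
      have d2' : dist (ψ y) (ψ p) < ε / 2 := by rw [e1]; exact d2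
      linarith
  refine ⟨ψ, ⟨hψcont, hφψ⟩, ?_⟩
  rintro ψ' ⟨hψ'c, hψ'eq⟩
  have : Set.EqOn ψ' ψ {x : Ω | g x ≠ 0} := by
    intro x hx
    have := (hψ'eq x).symm.trans (hφψ x)
    exact mul_left_cancel₀ hx this
  exact Continuous.ext_on hU hψ'c hψcont this
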